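/- Positive representation of U_q(sl₃) in a quantum torus algebra (the paper's Proposition 5.1 for the reduced word (1,2,1), with the spectral parameters relabeled consistently): in H, set e₁ := e(w − 2p_w) + e(−w − 2p_w); e₂ := e(u − 2p_u − 2p_v + 2p_w) + e(v − w − 2p_v) + e(−v + w − 2p_v) + e(−u − 2p_u − 2p_v + 2p_w); f₁ := e(−2u + v − w − 2λ₁ + 2p_w) + e(−u − 2λ₁ + 2p_u) + e(u + 2λ₁ + 2p_u) + e(2u − v + w + 2λ₁ + 2p_w); f₂ := e(u − v − 2λ₂ + 2p_v) + e(−u + v + 2λ₂ + 2p_v); K₁ := e(−2u + v − 2w − 2λ₁); K₂ := e(u − 2v + w − 2λ₂). Then these elements satisfy all defining relations of the quantum group U_q(sl₃) with rescaled generators, namely: K₁ and K₂ are invertible and commute; K_i·e_j = q^{a_{ij}}·e_j·K_i and K_i·f_j = q^{−a_{ij}}·f_j·K_i for i, j ∈ {1,2}, where a₁₁ = a₂₂ = 2 and a₁₂ = a₂₁ = −1; e_i·f_j − f_j·e_i = 0 for i ≠ j; e_i·f_i − f_i·e_i = (q − q⁻¹)(K_i⁻¹ − K_i) for i ∈ {1,2};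 and the quantum Serre relations e_i²·e_j − (q + q⁻¹)·e_i·e_j·e_i + e_j·e_i² = 0 and f_i²·f_j − (q + q⁻¹)·f_i·f_j·f_i + f_j·f_i² = 0 for i ≠ j. Consequently the assignment E_i ↦ e_i, F_i ↦ f_i, K_i^{±1} ↦ K_i^{±1} defines a K-algebra homomorphism from U_q(sl₃) (with rescaled generators) to H. -/
import Mathlib


noncomputable section

section QTorus
variable {G : Type*} [Group G]

theorem qswap {a b : G} (h : Commute a b) (x : G) : a * (b * x) = b * (a * x) := by
  rw [← mul_assoc, h.eq, mul_assoc]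

theorem qc_pow {c u p : G} (hc : ∀ x, Commute c x) (h : u * p = c * (p * u))
    (a b : ℤ) : u ^ a * p ^ b = c ^ (a * b) * (p ^ b * u ^ a) := by
  have hb : ∀ b : ℤ, u * p ^ b = c ^ b * (p ^ b * u) := by
    intro b
    have h1 : SemiconjBy u p (c * p) := by
      unfold SemiconjBy; rw [h, mul_assoc]
    have h2 := h1.zpow_right b
    unfold SemiconjBy at h2
    rw [h2, (hc p).mul_zpow, mul_assoc]
  have h3 : SemiconjBy (p ^ b) u (c ^ (-b) * u) := by
    unfold SemiconjBy
    rw [mul_assoc, hb b, ← mul_assoc, ← zpow_add c, neg_add_cancel,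
      zpow_zero, one_mul]
  have h4 := h3.zpow_right a
  unfold SemiconjBy at h4
  rw [((hc u).zpow_left (-b)).mul_zpow, ← zpow_mul] at h4
  rw [← one_mul (u ^ a * p ^ b), ← zpow_zero c, show (0:ℤ) = a * b + -b * a by ring,
    zpow_add c, mul_assoc, ← mul_assoc (c ^ (-b * a)), ← h4, ← mul_assoc]

/-- q-commuting pair "N-monomial" product rule. -/
theorem qc_nmul {c u p : G} (hc : ∀ x, Commute c x) (h : u * p = c * (p * u))
    (a b a' b' : ℤ) :
    (u ^ a * p ^ b) * (u ^ a' * p ^ b') = c ^ (-(b * a')) * (u ^ (a + a') * p ^ (b + b')) := by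
  have h1 : p ^ b * u ^ a' = c ^ (-(a' * b)) * (u ^ a' * p ^ b) := by
    have := qc_pow hc h a' b
    rw [this, ← mul_assoc, ← zpow_add c, neg_add_cancel, zpow_zero, one_mul]
  calc (u ^ a * p ^ b) * (u ^ a' * p ^ b')
      = u ^ a * ((p ^ b * u ^ a') * p ^ b') := by simp only [mul_assoc]
    _ = u ^ a * ((c ^ (-(a' * b)) * (u ^ a' * p ^ b)) * p ^ b') := by rw [h1]
    _ = c ^ (-(a' * b)) * (u ^ a * u ^ a' * (p ^ b * p ^ b')) := by
        simp only [mul_assoc]; rw [qswap ((hc _).symm.zpow_right _)]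
    _ = c ^ (-(b * a')) * (u ^ (a + a') * p ^ (b + b')) := by
        rw [← zpow_add u, ← zpow_add p, mul_comm a' b]
end QTorus

section QTorus2
variable {G : Type*} [Group G]

theorem reorder6 (A B C D E F Z : G) (hBD : Commute B D) (hCD : Commute C D)
    (hCE : Commute C E) :
    A * B * C * D * E * F * Z = (A * D) * ((B * E) * ((C * F) * Z)) := by
  simp only [mul_assoc]
  rw [qswap hCD, qswap hCE, qswap hBD]

set_option maxHeartbeats 1000000 in
theorem torus_key (c u1 u2 u3 p1 p2 p3 z1 z2 : G)
    (hc : ∀ x, Commute c x)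
    (h1 : u1 * p1 = c * (p1 * u1)) (h2 : u2 * p2 = c * (p2 * u2))
    (h3 : u3 * p3 = c * (p3 * u3))
    (h12 : Commute u1 u2) (h13 : Commute u1 u3)
    (h1p2 : Commute u1 p2) (h1p3 : Commute u1 p3)
    (h1z1 : Commute u1 z1) (h1z2 : Commute u1 z2)
    (h23 : Commute u2 u3) (h2p1 : Commute u2 p1) (h2p3 : Commute u2 p3)
    (h2z1 : Commute u2 z1) (h2z2 : Commute u2 z2)
    (h3p1 : Commute u3 p1) (h3p2 : Commute u3 p2)
    (h3z1 : Commute u3 z1) (h3z2 : Commute u3 z2)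
    (hp12 : Commute p1 p2) (hp13 : Commute p1 p3)
    (hp1z1 : Commute p1 z1) (hp1z2 : Commute p1 z2)
    (hp23 : Commute p2 p3) (hp2z1 : Commute p2 z1) (hp2z2 : Commute p2 z2)
    (hp3z1 : Commute p3 z1) (hp3z2 : Commute p3 z2) (hz12 : Commute z1 z2)
    (a1 a2 a3 b1 b2 b3 g1 g2 a1' a2' a3' b1' b2' b3' g1' g2' : ℤ) :
    (u1^a1 * u2^a2 * u3^a3 * p1^b1 * p2^b2 * p3^b3 * z1^g1 * z2^g2) *
    (u1^a1' * u2^a2' * u3^a3' * p1^b1' * p2^b2' * p3^b3' * z1^g1' * z2^g2') =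
    c ^ (-(b1*a1' + b2*a2' + b3*a3')) *
    (u1^(a1+a1') * u2^(a2+a2') * u3^(a3+a3') * p1^(b1+b1') * p2^(b2+b2') *
      p3^(b3+b3') * z1^(g1+g1') * z2^(g2+g2')) := by
  -- grouped forms
  have grp : ∀ x1 x2 x3 y1 y2 y3 w1 w2 : ℤ,
      u1^x1 * u2^x2 * u3^x3 * p1^y1 * p2^y2 * p3^y3 * z1^w1 * z2^w2 =
      (u1^x1 * p1^y1) * ((u2^x2 * p2^y2) * ((u3^x3 * p3^y3) * (z1^w1 * z2^w2))) := by
    intro x1 x2 x3 y1 y2 y3 w1 w2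
    have := reorder6 (u1^x1) (u2^x2) (u3^x3) (p1^y1) (p2^y2) (p3^y3) (z1^w1 * z2^w2)
      (h2p1.zpow_zpow _ _) (h3p1.zpow_zpow _ _) (h3p2.zpow_zpow _ _)
    rw [← this]; simp only [mul_assoc]
  rw [grp, grp, grp]
  set N1 := u1^a1 * p1^b1
  set N2 := u2^a2 * p2^b2
  set N3 := u3^a3 * p3^b3
  set Z := z1^g1 * z2^g2
  set N1' := u1^a1' * p1^b1'
  set N2' := u2^a2' * p2^b2'
  set N3' := u3^a3' * p3^b3'
  set Z' := z1^g1' * z2^g2'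
  have cN2N1' : Commute N2 N1' :=
    ((h12.symm.zpow_zpow _ _).mul_right (h2p1.zpow_zpow _ _)).mul_left
      ((h1p2.symm.zpow_zpow _ _).mul_right (hp12.symm.zpow_zpow _ _))
  have cN3N1' : Commute N3 N1' :=
    ((h13.symm.zpow_zpow _ _).mul_right (h3p1.zpow_zpow _ _)).mul_left
      ((h1p3.symm.zpow_zpow _ _).mul_right (hp13.symm.zpow_zpow _ _))
  have cN3N2' : Commute N3 N2' :=
    ((h23.symm.zpow_zpow _ _).mul_right (h3p2.zpow_zpow _ _)).mul_left
      ((h2p3.symm.zpow_zpow _ _).mul_right (hp23.symm.zpow_zpow _ _))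
  have cZN1' : Commute Z N1' :=
    ((h1z1.symm.zpow_zpow _ _).mul_right (hp1z1.symm.zpow_zpow _ _)).mul_left
      ((h1z2.symm.zpow_zpow _ _).mul_right (hp1z2.symm.zpow_zpow _ _))
  have cZN2' : Commute Z N2' :=
    ((h2z1.symm.zpow_zpow _ _).mul_right (hp2z1.symm.zpow_zpow _ _)).mul_left
      ((h2z2.symm.zpow_zpow _ _).mul_right (hp2z2.symm.zpow_zpow _ _))
  have cZN3' : Commute Z N3' :=
    ((h3z1.symm.zpow_zpow _ _).mul_right (hp3z1.symm.zpow_zpow _ _)).mul_left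
      ((h3z2.symm.zpow_zpow _ _).mul_right (hp3z2.symm.zpow_zpow _ _))
  have hXY : N1 * (N2 * (N3 * Z)) * (N1' * (N2' * (N3' * Z'))) =
      (N1 * N1') * ((N2 * N2') * ((N3 * N3') * (Z * Z'))) := by
    simp only [mul_assoc]
    rw [qswap cZN1', qswap cN3N1', qswap cN2N1', qswap cZN2', qswap cN3N2', qswap cZN3']
  rw [hXY]
  have e1 : N1 * N1' = c ^ (-(b1*a1')) * (u1^(a1+a1') * p1^(b1+b1')) := qc_nmul hc h1 _ _ _ _
  have e2 : N2 * N2' = c ^ (-(b2*a2')) * (u2^(a2+a2') * p2^(b2+b2')) := qc_nmul hc h2 _ _ _ _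
  have e3 : N3 * N3' = c ^ (-(b3*a3')) * (u3^(a3+a3') * p3^(b3+b3')) := qc_nmul hc h3 _ _ _ _
  have eZ : Z * Z' = z1^(g1+g1') * z2^(g2+g2') := by
    show (z1^g1 * z2^g2) * (z1^g1' * z2^g2') = _
    rw [mul_assoc, ← mul_assoc (z2^g2), (hz12.symm.zpow_zpow g2 g1').eq,
      mul_assoc, ← mul_assoc, ← zpow_add z1, ← zpow_add z2]
  rw [e1, e2, e3, eZ]
  have ccomm : ∀ (n : ℤ) (x y : G), x * (c ^ n * y) = c ^ n * (x * y) :=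
    fun n x y => qswap ((hc x).zpow_left n).symm y
  simp only [mul_assoc]
  rw [ccomm (-(b3*a3')) (p2 ^ (b2+b2')), ccomm (-(b3*a3')) (u2 ^ (a2+a2')),
      ← mul_assoc (c ^ (-(b2*a2'))), ← zpow_add c,
      ccomm (-(b2*a2') + -(b3*a3')) (p1 ^ (b1+b1')),
      ccomm (-(b2*a2') + -(b3*a3')) (u1 ^ (a1+a1')),
      ← mul_assoc (c ^ (-(b1*a1'))), ← zpow_add c]
  congr 2
  ring
end QTorus2


/-- Generator `i` of the free algebra on 8 generators; the indexing convention is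
`0 ↦ E₁`, `1 ↦ E₂`, `2 ↦ F₁`, `3 ↦ F₂`, `4 ↦ K₁`, `5 ↦ K₁⁻¹`, `6 ↦ K₂`, `7 ↦ K₂⁻¹`. -/
def gg (𝕜 : Type*) [Field 𝕜] (i : Fin 8) : FreeAlgebra 𝕜 (Fin 8) := FreeAlgebra.ι 𝕜 i

/-- The defining relations of the quantum group `U_q(sl₃)` with rescaled generators
`e_i, f_i, K_i^{±1}` (Cartan matrix `a₁₁ = a₂₂ = 2`, `a₁₂ = a₂₁ = −1`, and
`e_i f_i − f_i e_i = (q − q⁻¹)(K_i⁻¹ − K_i)`). -/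
inductive Sl3Rel (𝕜 : Type*) [Field 𝕜] (q : 𝕜) :
    FreeAlgebra 𝕜 (Fin 8) → FreeAlgebra 𝕜 (Fin 8) → Prop
  | K1inv_right : Sl3Rel 𝕜 q (gg 𝕜 4 * gg 𝕜 5) 1
  | K1inv_left : Sl3Rel 𝕜 q (gg 𝕜 5 * gg 𝕜 4) 1
  | K2inv_right : Sl3Rel 𝕜 q (gg 𝕜 6 * gg 𝕜 7) 1
  | K2inv_left : Sl3Rel 𝕜 q (gg 𝕜 7 * gg 𝕜 6) 1
  | K1K2 : Sl3Rel 𝕜 q (gg 𝕜 4 * gg 𝕜 6) (gg 𝕜 6 * gg 𝕜 4)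
  | K1E1 : Sl3Rel 𝕜 q (gg 𝕜 4 * gg 𝕜 0) ((q ^ 2) • (gg 𝕜 0 * gg 𝕜 4))
  | K1E2 : Sl3Rel 𝕜 q (gg 𝕜 4 * gg 𝕜 1) (q⁻¹ • (gg 𝕜 1 * gg 𝕜 4))
  | K2E1 : Sl3Rel 𝕜 q (gg 𝕜 6 * gg 𝕜 0) (q⁻¹ • (gg 𝕜 0 * gg 𝕜 6))
  | K2E2 : Sl3Rel 𝕜 q (gg 𝕜 6 * gg 𝕜 1) ((q ^ 2) • (gg 𝕜 1 * gg 𝕜 6))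
  | K1F1 : Sl3Rel 𝕜 q (gg 𝕜 4 * gg 𝕜 2) (((q ^ 2)⁻¹) • (gg 𝕜 2 * gg 𝕜 4))
  | K1F2 : Sl3Rel 𝕜 q (gg 𝕜 4 * gg 𝕜 3) (q • (gg 𝕜 3 * gg 𝕜 4))
  | K2F1 : Sl3Rel 𝕜 q (gg 𝕜 6 * gg 𝕜 2) (q • (gg 𝕜 2 * gg 𝕜 6))
  | K2F2 : Sl3Rel 𝕜 q (gg 𝕜 6 * gg 𝕜 3) (((q ^ 2)⁻¹) • (gg 𝕜 3 * gg 𝕜 6))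
  | E1F2 : Sl3Rel 𝕜 q (gg 𝕜 0 * gg 𝕜 3) (gg 𝕜 3 * gg 𝕜 0)
  | E2F1 : Sl3Rel 𝕜 q (gg 𝕜 1 * gg 𝕜 2) (gg 𝕜 2 * gg 𝕜 1)
  | E1F1 : Sl3Rel 𝕜 q (gg 𝕜 0 * gg 𝕜 2 - gg 𝕜 2 * gg 𝕜 0) ((q - q⁻¹) • (gg 𝕜 5 - gg 𝕜 4))
  | E2F2 : Sl3Rel 𝕜 q (gg 𝕜 1 * gg 𝕜 3 - gg 𝕜 3 * gg 𝕜 1) ((q - q⁻¹) • (gg 𝕜 7 - gg 𝕜 6))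
  | SerreE12 : Sl3Rel 𝕜 q
      (gg 𝕜 0 ^ 2 * gg 𝕜 1 - (q + q⁻¹) • (gg 𝕜 0 * gg 𝕜 1 * gg 𝕜 0) + gg 𝕜 1 * gg 𝕜 0 ^ 2) 0
  | SerreE21 : Sl3Rel 𝕜 q
      (gg 𝕜 1 ^ 2 * gg 𝕜 0 - (q + q⁻¹) • (gg 𝕜 1 * gg 𝕜 0 * gg 𝕜 1) + gg 𝕜 0 * gg 𝕜 1 ^ 2) 0
  | SerreF12 : Sl3Rel 𝕜 q
      (gg 𝕜 2 ^ 2 * gg 𝕜 3 - (q + q⁻¹) • (gg 𝕜 2 * gg 𝕜 3 * gg 𝕜 2) + gg 𝕜 3 * gg 𝕜 2 ^ 2) 0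
  | SerreF21 : Sl3Rel 𝕜 q
      (gg 𝕜 3 ^ 2 * gg 𝕜 2 - (q + q⁻¹) • (gg 𝕜 3 * gg 𝕜 2 * gg 𝕜 3) + gg 𝕜 2 * gg 𝕜 3 ^ 2) 0

/-- The quantum group `U_q(sl₃)` (with rescaled generators), presented by generators
and relations. -/
def UqSl3 (𝕜 : Type*) [Field 𝕜] (q : 𝕜) : Type _ := RingQuot (Sl3Rel 𝕜 q)

instance (𝕜 : Type*) [Field 𝕜] (q : 𝕜) : Ring (UqSl3 𝕜 q) := by unfold UqSl3; infer_instance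
instance (𝕜 : Type*) [Field 𝕜] (q : 𝕜) : Algebra 𝕜 (UqSl3 𝕜 q) := by unfold UqSl3; infer_instance

/-- The image of generator `i` in `U_q(sl₃)`. -/
def UqSl3.gen (𝕜 : Type*) [Field 𝕜] (q : 𝕜) (i : Fin 8) : UqSl3 𝕜 q :=
  RingQuot.mkAlgHom 𝕜 (Sl3Rel 𝕜 q) (gg 𝕜 i)

variable {𝕜 : Type*} [Field 𝕜] {H : Type*} [Ring H] [Algebra 𝕜 H]

/-- The normalized (Weyl-ordered) monomial
`e(αu·u + αv·v + αw·w + 2βu·pu + 2βv·pv + 2βw·pw + γ₁λ₁ + γ₂λ₂)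
  = t^{−(αuβu + αvβv + αwβw)} · U^{αu} V^{αv} W^{αw} Pu^{βu} Pv^{βv} Pw^{βw} L₁^{γ₁} L₂^{γ₂}`
in the quantum torus algebra `H`, where `t = q^{1/2}`. -/
def emon (t : 𝕜) (U V W Pu Pv Pw L1 L2 : Hˣ)
    (au av aw bu bv bw g1 g2 : ℤ) : H :=
  t ^ (-(au * bu + av * bv + aw * bw)) •
    ((U ^ au * V ^ av * W ^ aw * Pu ^ bu * Pv ^ bv * Pw ^ bw * L1 ^ g1 * L2 ^ g2 : Hˣ) : H)

set_option maxHeartbeats 1000000 in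
/-- positive representation of `U_q(sl₃)` in a quantum torus
algebra, reduced word `(1,2,1)`: the elements `e₁, e₂, f₁, f₂, K₁, K₂` of the
quantum torus algebra `H` defined below satisfy all defining relations of
`U_q(sl₃)` with rescaled generators; consequently `E_i ↦ e_i`, `F_i ↦ f_i`,
`K_i^{±1} ↦ K_i^{±1}` defines a `𝕜`-algebra homomorphism `U_q(sl₃) → H`. -/
theorem positive_representation_Uq_sl3
    (t q : 𝕜) (ht : t ≠ 0) (hq : q = t ^ 2)
    (U V W Pu Pv Pw L1 L2 : Hˣ)
    -- the three `q`-commuting pairs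
    (hUPu : (U : H) * Pu = q • ((Pu : H) * U))
    (hVPv : (V : H) * Pv = q • ((Pv : H) * V))
    (hWPw : (W : H) * Pw = q • ((Pw : H) * W))
    -- all other pairs of generators commute
    (hUV : Commute (U : H) (V : H)) (hUW : Commute (U : H) (W : H))
    (hUPv : Commute (U : H) (Pv : H)) (hUPw : Commute (U : H) (Pw : H))
    (hUL1 : Commute (U : H) (L1 : H)) (hUL2 : Commute (U : H) (L2 : H))
    (hVW : Commute (V : H) (W : H)) (hVPu : Commute (V : H) (Pu : H))
    (hVPw : Commute (V : H) (Pw : H)) (hVL1 : Commute (V : H) (L1 : H))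
    (hVL2 : Commute (V : H) (L2 : H)) (hWPu : Commute (W : H) (Pu : H))
    (hWPv : Commute (W : H) (Pv : H)) (hWL1 : Commute (W : H) (L1 : H))
    (hWL2 : Commute (W : H) (L2 : H)) (hPuPv : Commute (Pu : H) (Pv : H))
    (hPuPw : Commute (Pu : H) (Pw : H)) (hPuL1 : Commute (Pu : H) (L1 : H))
    (hPuL2 : Commute (Pu : H) (L2 : H)) (hPvPw : Commute (Pv : H) (Pw : H))
    (hPvL1 : Commute (Pv : H) (L1 : H)) (hPvL2 : Commute (Pv : H) (L2 : H))
    (hPwL1 : Commute (Pw : H) (L1 : H)) (hPwL2 : Commute (Pw : H) (L2 : H))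
    (hL1L2 : Commute (L1 : H) (L2 : H)) :
    ∀ e₁ e₂ f₁ f₂ K₁ K₂ : H,
      -- e₁ = e(w − 2p_w) + e(−w − 2p_w)
      e₁ = emon t U V W Pu Pv Pw L1 L2 0 0 1 0 0 (-1) 0 0
            + emon t U V W Pu Pv Pw L1 L2 0 0 (-1) 0 0 (-1) 0 0 →
      -- e₂ = e(u − 2p_u − 2p_v + 2p_w) + e(v − w − 2p_v) + e(−v + w − 2p_v)
      --        + e(−u − 2p_u − 2p_v + 2p_w)
      e₂ = emon t U V W Pu Pv Pw L1 L2 1 0 0 (-1) (-1) 1 0 0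
            + emon t U V W Pu Pv Pw L1 L2 0 1 (-1) 0 (-1) 0 0 0
            + emon t U V W Pu Pv Pw L1 L2 0 (-1) 1 0 (-1) 0 0 0
            + emon t U V W Pu Pv Pw L1 L2 (-1) 0 0 (-1) (-1) 1 0 0 →
      -- f₁ = e(−2u + v − w − 2λ₁ + 2p_w) + e(−u − 2λ₁ + 2p_u) + e(u + 2λ₁ + 2p_u)
      --        + e(2u − v + w + 2λ₁ + 2p_w)
      f₁ = emon t U V W Pu Pv Pw L1 L2 (-2) 1 (-1) 0 0 1 (-2) 0
            + emon t U V W Pu Pv Pw L1 L2 (-1) 0 0 1 0 0 (-2) 0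
            + emon t U V W Pu Pv Pw L1 L2 1 0 0 1 0 0 2 0
            + emon t U V W Pu Pv Pw L1 L2 2 (-1) 1 0 0 1 2 0 →
      -- f₂ = e(u − v − 2λ₂ + 2p_v) + e(−u + v + 2λ₂ + 2p_v)
      f₂ = emon t U V W Pu Pv Pw L1 L2 1 (-1) 0 0 1 0 0 (-2)
            + emon t U V W Pu Pv Pw L1 L2 (-1) 1 0 0 1 0 0 2 →
      -- K₁ = e(−2u + v − 2w − 2λ₁),  K₂ = e(u − 2v + w − 2λ₂)
      K₁ = emon t U V W Pu Pv Pw L1 L2 (-2) 1 (-2) 0 0 0 (-2) 0 →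
      K₂ = emon t U V W Pu Pv Pw L1 L2 1 (-2) 1 0 0 0 0 (-2) →
      -- K₁, K₂ are invertible and commute
      (IsUnit K₁ ∧ IsUnit K₂ ∧ K₁ * K₂ = K₂ * K₁ ∧
      -- K_i e_j = q^{a_ij} e_j K_i
      K₁ * e₁ = (q ^ 2) • (e₁ * K₁) ∧ K₁ * e₂ = q⁻¹ • (e₂ * K₁) ∧
      K₂ * e₁ = q⁻¹ • (e₁ * K₂) ∧ K₂ * e₂ = (q ^ 2) • (e₂ * K₂) ∧
      -- K_i f_j = q^{−a_ij} f_j K_i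
      K₁ * f₁ = ((q ^ 2)⁻¹) • (f₁ * K₁) ∧ K₁ * f₂ = q • (f₂ * K₁) ∧
      K₂ * f₁ = q • (f₁ * K₂) ∧ K₂ * f₂ = ((q ^ 2)⁻¹) • (f₂ * K₂) ∧
      -- e_i f_j = f_j e_i for i ≠ j
      e₁ * f₂ = f₂ * e₁ ∧ e₂ * f₁ = f₁ * e₂ ∧
      -- e_i f_i − f_i e_i = (q − q⁻¹)(K_i⁻¹ − K_i)
      e₁ * f₁ - f₁ * e₁ = (q - q⁻¹) • (Ring.inverse K₁ - K₁) ∧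
      e₂ * f₂ - f₂ * e₂ = (q - q⁻¹) • (Ring.inverse K₂ - K₂) ∧
      -- quantum Serre relations
      e₁ ^ 2 * e₂ - (q + q⁻¹) • (e₁ * e₂ * e₁) + e₂ * e₁ ^ 2 = 0 ∧
      e₂ ^ 2 * e₁ - (q + q⁻¹) • (e₂ * e₁ * e₂) + e₁ * e₂ ^ 2 = 0 ∧
      f₁ ^ 2 * f₂ - (q + q⁻¹) • (f₁ * f₂ * f₁) + f₂ * f₁ ^ 2 = 0 ∧
      f₂ ^ 2 * f₁ - (q + q⁻¹) • (f₂ * f₁ * f₂) + f₁ * f₂ ^ 2 = 0) ∧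
      -- consequently there is an algebra homomorphism U_q(sl₃) → H
      ∃ φ : UqSl3 𝕜 q →ₐ[𝕜] H,
        φ (UqSl3.gen 𝕜 q 0) = e₁ ∧ φ (UqSl3.gen 𝕜 q 1) = e₂ ∧
        φ (UqSl3.gen 𝕜 q 2) = f₁ ∧ φ (UqSl3.gen 𝕜 q 3) = f₂ ∧
        φ (UqSl3.gen 𝕜 q 4) = K₁ ∧ φ (UqSl3.gen 𝕜 q 5) = Ring.inverse K₁ ∧
        φ (UqSl3.gen 𝕜 q 6) = K₂ ∧ φ (UqSl3.gen 𝕜 q 7) = Ring.inverse K₂ := by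
  intro e₁ e₂ f₁ f₂ K₁ K₂ he₁ he₂ hf₁ hf₂ hK₁ hK₂
  subst hq
  have ht2 : (t ^ 2 : 𝕜) ≠ 0 := pow_ne_zero 2 ht
  set c : Hˣ := Units.map (algebraMap 𝕜 H).toMonoidHom (Units.mk0 (t ^ 2) ht2) with hc_def
  have hcval : (c : H) = algebraMap 𝕜 H (t ^ 2) := rfl
  have hccom : ∀ x : Hˣ, Commute c x := fun x => Units.ext (by
    simp only [Units.val_mul, hcval]; exact (Algebra.commutes _ _))
  have hcz : ∀ (n : ℤ) (x : Hˣ), ((c ^ n * x : Hˣ) : H) = ((t ^ 2) ^ n : 𝕜) • (x : H) := by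
    intro n x
    rw [Units.val_mul, hc_def, ← map_zpow, Units.coe_map]
    simp only [MonoidHom.coe_coe, Units.val_zpow_eq_zpow_val, Units.val_mk0]
    exact (Algebra.smul_def _ _).symm
  have uc : ∀ {X Y : Hˣ}, Commute (X : H) (Y : H) → Commute X Y := fun h =>
    Units.ext (by simp only [Units.val_mul]; exact h.eq)
  have hU1 : (U : Hˣ) * Pu = c * (Pu * U) := Units.ext (by
    simp only [Units.val_mul, hcval, ← Algebra.smul_def]; exact hUPu)
  have hV1 : (V : Hˣ) * Pv = c * (Pv * V) := Units.ext (by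
    simp only [Units.val_mul, hcval, ← Algebra.smul_def]; exact hVPv)
  have hW1 : (W : Hˣ) * Pw = c * (Pw * W) := Units.ext (by
    simp only [Units.val_mul, hcval, ← Algebra.smul_def]; exact hWPw)
  have key : ∀ au av aw bu bv bw g1 g2 au' av' aw' bu' bv' bw' g1' g2' : ℤ,
      emon t U V W Pu Pv Pw L1 L2 au av aw bu bv bw g1 g2 *
        emon t U V W Pu Pv Pw L1 L2 au' av' aw' bu' bv' bw' g1' g2' =
      t ^ (au * bu' + av * bv' + aw * bw' - bu * au' - bv * av' - bw * aw') •
        emon t U V W Pu Pv Pw L1 L2 (au + au') (av + av') (aw + aw') (bu + bu')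
          (bv + bv') (bw + bw') (g1 + g1') (g2 + g2') := by
    intro au av aw bu bv bw g1 g2 au' av' aw' bu' bv' bw' g1' g2'
    unfold emon
    rw [smul_mul_assoc, mul_smul_comm, ← Units.val_mul,
      torus_key (G := Hˣ) c U V W Pu Pv Pw L1 L2 hccom hU1 hV1 hW1
        (uc hUV) (uc hUW) (uc hUPv) (uc hUPw) (uc hUL1) (uc hUL2)
        (uc hVW) (uc hVPu) (uc hVPw) (uc hVL1) (uc hVL2)
        (uc hWPu) (uc hWPv) (uc hWL1) (uc hWL2)
        (uc hPuPv) (uc hPuPw) (uc hPuL1) (uc hPuL2)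
        (uc hPvPw) (uc hPvL1) (uc hPvL2) (uc hPwL1) (uc hPwL2) (uc hL1L2)
        au av aw bu bv bw g1 g2 au' av' aw' bu' bv' bw' g1' g2',
      hcz, smul_smul, smul_smul, smul_smul,
      ← zpow_natCast t 2, ← zpow_mul, ← zpow_add₀ ht, ← zpow_add₀ ht, ← zpow_add₀ ht]
    congr 1
    push_cast
    ring
  have hq1 : (t : 𝕜) ^ (2:ℕ) = t ^ (2:ℤ) := by
    rw [show (2:ℤ) = ((2:ℕ):ℤ) by norm_num, zpow_natCast]
  have htt : (t : 𝕜) * t = t ^ (2:ℤ) := by rw [← hq1]; ring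
  have hzn : ∀ (a : ℤ) (n : ℕ), ((t:𝕜) ^ a) ^ n = t ^ (a * n) := fun a n => by
    rw [← zpow_natCast (t ^ a) n, ← zpow_mul]
  have hz2 : ∀ a : ℤ, ((t:𝕜) ^ a)⁻¹ = t ^ (-a) := fun a => (zpow_neg t a).symm
  have hz1 : ∀ a b : ℤ, (t:𝕜) ^ a * t ^ b = t ^ (a + b) := fun a b => (zpow_add₀ ht a b).symm
  have hone : emon t U V W Pu Pv Pw L1 L2 0 0 0 0 0 0 0 0 = (1:H) := by
    simp [emon]
  have hK1r : K₁ * (emon t U V W Pu Pv Pw L1 L2 2 (-1) 2 0 0 0 2 0) = 1 := by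
    rw [hK₁, key]; norm_num [hone]
  have hK1l : (emon t U V W Pu Pv Pw L1 L2 2 (-1) 2 0 0 0 2 0) * K₁ = 1 := by
    rw [hK₁, key]; norm_num [hone]
  have hK2r : K₂ * (emon t U V W Pu Pv Pw L1 L2 (-1) 2 (-1) 0 0 0 0 2) = 1 := by
    rw [hK₂, key]; norm_num [hone]
  have hK2l : (emon t U V W Pu Pv Pw L1 L2 (-1) 2 (-1) 0 0 0 0 2) * K₂ = 1 := by
    rw [hK₂, key]; norm_num [hone]
  have isU1 : IsUnit K₁ := ⟨⟨K₁, emon t U V W Pu Pv Pw L1 L2 2 (-1) 2 0 0 0 2 0, hK1r, hK1l⟩, rfl⟩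
  have isU2 : IsUnit K₂ := ⟨⟨K₂, emon t U V W Pu Pv Pw L1 L2 (-1) 2 (-1) 0 0 0 0 2, hK2r, hK2l⟩, rfl⟩
  have rinv1 : Ring.inverse K₁ = (emon t U V W Pu Pv Pw L1 L2 2 (-1) 2 0 0 0 2 0) :=
    Ring.inverse_unit ⟨K₁, emon t U V W Pu Pv Pw L1 L2 2 (-1) 2 0 0 0 2 0, hK1r, hK1l⟩
  have rinv2 : Ring.inverse K₂ = (emon t U V W Pu Pv Pw L1 L2 (-1) 2 (-1) 0 0 0 0 2) :=
    Ring.inverse_unit ⟨K₂, emon t U V W Pu Pv Pw L1 L2 (-1) 2 (-1) 0 0 0 0 2, hK2r, hK2l⟩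
  have r3 : K₁ * K₂ = K₂ * K₁ := by
    rw [hK₁, hK₂]
    simp only [pow_two, mul_add, add_mul, sub_mul, mul_sub, smul_mul_assoc, mul_smul_comm,
      smul_add, smul_sub, smul_smul, key]
    try simp only [htt, hq1, hzn, hz2, hz1]
    try simp only [Nat.cast_ofNat, Int.reduceNeg, Int.reduceAdd, Int.reduceSub, Int.reduceMul,
      zpow_zero, one_smul]
    try module
  have r4 : K₁ * e₁ = (t^2) ^ 2 • (e₁ * K₁) := by
    rw [hK₁, he₁]
    simp only [pow_two, mul_add, add_mul, sub_mul, mul_sub, smul_mul_assoc, mul_smul_comm,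
      smul_add, smul_sub, smul_smul, key]
    try simp only [htt, hq1, hzn, hz2, hz1]
    try simp only [Nat.cast_ofNat, Int.reduceNeg, Int.reduceAdd, Int.reduceSub, Int.reduceMul,
      zpow_zero, one_smul]
    try module
  have r5 : K₁ * e₂ = (t^2)⁻¹ • (e₂ * K₁) := by
    rw [hK₁, he₂]
    simp only [pow_two, mul_add, add_mul, sub_mul, mul_sub, smul_mul_assoc, mul_smul_comm,
      smul_add, smul_sub, smul_smul, key]
    try simp only [htt, hq1, hzn, hz2, hz1]
    try simp only [Nat.cast_ofNat, Int.reduceNeg, Int.reduceAdd, Int.reduceSub, Int.reduceMul,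
      zpow_zero, one_smul]
    try module
  have r6 : K₂ * e₁ = (t^2)⁻¹ • (e₁ * K₂) := by
    rw [hK₂, he₁]
    simp only [pow_two, mul_add, add_mul, sub_mul, mul_sub, smul_mul_assoc, mul_smul_comm,
      smul_add, smul_sub, smul_smul, key]
    try simp only [htt, hq1, hzn, hz2, hz1]
    try simp only [Nat.cast_ofNat, Int.reduceNeg, Int.reduceAdd, Int.reduceSub, Int.reduceMul,
      zpow_zero, one_smul]
    try module
  have r7 : K₂ * e₂ = (t^2) ^ 2 • (e₂ * K₂) := by
    rw [hK₂, he₂]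
    simp only [pow_two, mul_add, add_mul, sub_mul, mul_sub, smul_mul_assoc, mul_smul_comm,
      smul_add, smul_sub, smul_smul, key]
    try simp only [htt, hq1, hzn, hz2, hz1]
    try simp only [Nat.cast_ofNat, Int.reduceNeg, Int.reduceAdd, Int.reduceSub, Int.reduceMul,
      zpow_zero, one_smul]
    try module
  have r8 : K₁ * f₁ = ((t^2) ^ 2)⁻¹ • (f₁ * K₁) := by
    rw [hK₁, hf₁]
    simp only [pow_two, mul_add, add_mul, sub_mul, mul_sub, smul_mul_assoc, mul_smul_comm,
      smul_add, smul_sub, smul_smul, key]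
    try simp only [htt, hq1, hzn, hz2, hz1]
    try simp only [Nat.cast_ofNat, Int.reduceNeg, Int.reduceAdd, Int.reduceSub, Int.reduceMul,
      zpow_zero, one_smul]
    try module
  have r9 : K₁ * f₂ = (t^2) • (f₂ * K₁) := by
    rw [hK₁, hf₂]
    simp only [pow_two, mul_add, add_mul, sub_mul, mul_sub, smul_mul_assoc, mul_smul_comm,
      smul_add, smul_sub, smul_smul, key]
    try simp only [htt, hq1, hzn, hz2, hz1]
    try simp only [Nat.cast_ofNat, Int.reduceNeg, Int.reduceAdd, Int.reduceSub, Int.reduceMul,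
      zpow_zero, one_smul]
    try module
  have r10 : K₂ * f₁ = (t^2) • (f₁ * K₂) := by
    rw [hK₂, hf₁]
    simp only [pow_two, mul_add, add_mul, sub_mul, mul_sub, smul_mul_assoc, mul_smul_comm,
      smul_add, smul_sub, smul_smul, key]
    try simp only [htt, hq1, hzn, hz2, hz1]
    try simp only [Nat.cast_ofNat, Int.reduceNeg, Int.reduceAdd, Int.reduceSub, Int.reduceMul,
      zpow_zero, one_smul]
    try module
  have r11 : K₂ * f₂ = ((t^2) ^ 2)⁻¹ • (f₂ * K₂) := by
    rw [hK₂, hf₂]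
    simp only [pow_two, mul_add, add_mul, sub_mul, mul_sub, smul_mul_assoc, mul_smul_comm,
      smul_add, smul_sub, smul_smul, key]
    try simp only [htt, hq1, hzn, hz2, hz1]
    try simp only [Nat.cast_ofNat, Int.reduceNeg, Int.reduceAdd, Int.reduceSub, Int.reduceMul,
      zpow_zero, one_smul]
    try module
  have r12 : e₁ * f₂ = f₂ * e₁ := by
    rw [he₁, hf₂]
    simp only [pow_two, mul_add, add_mul, sub_mul, mul_sub, smul_mul_assoc, mul_smul_comm,
      smul_add, smul_sub, smul_smul, key]
    try simp only [htt, hq1, hzn, hz2, hz1]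
    try simp only [Nat.cast_ofNat, Int.reduceNeg, Int.reduceAdd, Int.reduceSub, Int.reduceMul,
      zpow_zero, one_smul]
    try module
  have r13 : e₂ * f₁ = f₁ * e₂ := by
    rw [he₂, hf₁]
    simp only [pow_two, mul_add, add_mul, sub_mul, mul_sub, smul_mul_assoc, mul_smul_comm,
      smul_add, smul_sub, smul_smul, key]
    try simp only [htt, hq1, hzn, hz2, hz1]
    try simp only [Nat.cast_ofNat, Int.reduceNeg, Int.reduceAdd, Int.reduceSub, Int.reduceMul,
      zpow_zero, one_smul]
    try module
  have r14 : e₁ * f₁ - f₁ * e₁ = (t^2 - (t^2)⁻¹) • (Ring.inverse K₁ - K₁) := by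
    rw [rinv1, he₁, hf₁, hK₁]
    simp only [pow_two, mul_add, add_mul, sub_mul, mul_sub, smul_mul_assoc, mul_smul_comm,
      smul_add, smul_sub, smul_smul, key]
    try simp only [htt, hq1, hzn, hz2, hz1]
    try simp only [Nat.cast_ofNat, Int.reduceNeg, Int.reduceAdd, Int.reduceSub, Int.reduceMul,
      zpow_zero, one_smul]
    try module
  have r15 : e₂ * f₂ - f₂ * e₂ = (t^2 - (t^2)⁻¹) • (Ring.inverse K₂ - K₂) := by
    rw [rinv2, he₂, hf₂, hK₂]
    simp only [pow_two, mul_add, add_mul, sub_mul, mul_sub, smul_mul_assoc, mul_smul_comm,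
      smul_add, smul_sub, smul_smul, key]
    try simp only [htt, hq1, hzn, hz2, hz1]
    try simp only [Nat.cast_ofNat, Int.reduceNeg, Int.reduceAdd, Int.reduceSub, Int.reduceMul,
      zpow_zero, one_smul]
    try module
  have r16 : e₁ ^ 2 * e₂ - (t^2 + (t^2)⁻¹) • (e₁ * e₂ * e₁) + e₂ * e₁ ^ 2 = 0 := by
    rw [he₁, he₂]
    simp only [pow_two, mul_add, add_mul, sub_mul, mul_sub, smul_mul_assoc, mul_smul_comm,
      smul_add, smul_sub, smul_smul, key]
    try simp only [htt, hq1, hzn, hz2, hz1]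
    try simp only [Nat.cast_ofNat, Int.reduceNeg, Int.reduceAdd, Int.reduceSub, Int.reduceMul,
      zpow_zero, one_smul]
    try module
  have r17 : e₂ ^ 2 * e₁ - (t^2 + (t^2)⁻¹) • (e₂ * e₁ * e₂) + e₁ * e₂ ^ 2 = 0 := by
    rw [he₁, he₂]
    simp only [pow_two, mul_add, add_mul, sub_mul, mul_sub, smul_mul_assoc, mul_smul_comm,
      smul_add, smul_sub, smul_smul, key]
    try simp only [htt, hq1, hzn, hz2, hz1]
    try simp only [Nat.cast_ofNat, Int.reduceNeg, Int.reduceAdd, Int.reduceSub, Int.reduceMul,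
      zpow_zero, one_smul]
    try module
  have r18 : f₁ ^ 2 * f₂ - (t^2 + (t^2)⁻¹) • (f₁ * f₂ * f₁) + f₂ * f₁ ^ 2 = 0 := by
    rw [hf₁, hf₂]
    simp only [pow_two, mul_add, add_mul, sub_mul, mul_sub, smul_mul_assoc, mul_smul_comm,
      smul_add, smul_sub, smul_smul, key]
    try simp only [htt, hq1, hzn, hz2, hz1]
    try simp only [Nat.cast_ofNat, Int.reduceNeg, Int.reduceAdd, Int.reduceSub, Int.reduceMul,
      zpow_zero, one_smul]
    try module
  have r19 : f₂ ^ 2 * f₁ - (t^2 + (t^2)⁻¹) • (f₂ * f₁ * f₂) + f₁ * f₂ ^ 2 = 0 := by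
    rw [hf₁, hf₂]
    simp only [pow_two, mul_add, add_mul, sub_mul, mul_sub, smul_mul_assoc, mul_smul_comm,
      smul_add, smul_sub, smul_smul, key]
    try simp only [htt, hq1, hzn, hz2, hz1]
    try simp only [Nat.cast_ofNat, Int.reduceNeg, Int.reduceAdd, Int.reduceSub, Int.reduceMul,
      zpow_zero, one_smul]
    try module
  refine ⟨⟨isU1, isU2, r3, r4, r5, r6, r7, r8, r9, r10, r11, r12, r13, r14, r15, r16, r17, r18, r19⟩, ?_⟩
  have hrel : ∀ ⦃x y : FreeAlgebra 𝕜 (Fin 8)⦄, Sl3Rel 𝕜 (t ^ 2) x y →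
      (FreeAlgebra.lift 𝕜 (![e₁, e₂, f₁, f₂, K₁, emon t U V W Pu Pv Pw L1 L2 2 (-1) 2 0 0 0 2 0, K₂, emon t U V W Pu Pv Pw L1 L2 (-1) 2 (-1) 0 0 0 0 2] : Fin 8 → H)) x =
      (FreeAlgebra.lift 𝕜 (![e₁, e₂, f₁, f₂, K₁, emon t U V W Pu Pv Pw L1 L2 2 (-1) 2 0 0 0 2 0, K₂, emon t U V W Pu Pv Pw L1 L2 (-1) 2 (-1) 0 0 0 0 2] : Fin 8 → H)) y := by
    intro x y h
    induction h <;>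
      simp only [gg, map_mul, map_add, map_sub, map_smul, map_one, map_zero, map_pow,
        FreeAlgebra.lift_ι_apply] <;>
      norm_num [Matrix.cons_val_zero, Matrix.cons_val_one, Matrix.head_cons,
        Matrix.cons_val_succ]
    · exact hK1r
    · exact hK1l
    · exact hK2r
    · exact hK2l
    · exact r3
    · exact r4
    · exact r5
    · exact r6
    · exact r7
    · exact r8
    · exact r9
    · exact r10
    · exact r11
    · exact r12
    · exact r13
    · rw [← rinv1]; exact r14
    · rw [← rinv2]; exact r15
    · exact r16
    · exact r17
    · exact r18
    · exact r19
  refine ⟨RingQuot.liftAlgHom 𝕜 ⟨FreeAlgebra.lift 𝕜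
      (![e₁, e₂, f₁, f₂, K₁, emon t U V W Pu Pv Pw L1 L2 2 (-1) 2 0 0 0 2 0, K₂, emon t U V W Pu Pv Pw L1 L2 (-1) 2 (-1) 0 0 0 0 2] : Fin 8 → H), hrel⟩,
    ?_, ?_, ?_, ?_, ?_, ?_, ?_, ?_⟩ <;>
    · show (RingQuot.liftAlgHom 𝕜 _) ((RingQuot.mkAlgHom 𝕜 _) _) = _
      rw [RingQuot.liftAlgHom_mkAlgHom_apply]
      simp only [gg, FreeAlgebra.lift_ι_apply]
      try rw [rinv1]
      try rw [rinv2]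
      rfl

end
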